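/- Let p ≥ 1 and suppose d_{p,r}[i¹,j¹;...;i^k,j^k] is defined by Π_{s=1}^k (ξ^{−j^s} + ... + ξ^{−j^s+i^s}) = Σ_{r=0}^{p−1} d_{p,r} ξ^r with ξ a primitive p-th root of unity, 0 ≤ i^s ≤ p. If at least one i^s equals p−1 (equivalently L_{p−1} ≥ 1, where L = N'T_p as in the associated vector construction), then d_{p,r}[i¹,j¹;...;i^k,j^k] = 2^{L_1} 3^{L_2} ··· (p−1)^{L_{p−2}} p^{L_{p−1}−1} (p+1)^{L_p}, independent of r. -/

import Mathlib

noncomputable section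

/-- The tridiagonal matrix `T_m` with diagonal `(2, ..., 2, 1)` and `-1` on the
off-diagonals, so that `(T_m⁻¹)_{ij} = min(i,j)`. -/
def Tmat (m : ℕ) : Matrix (Fin m) (Fin m) ℤ := fun i j =>
  if i = j then (if (i : ℕ) = m - 1 then 1 else 2)
  else if (i : ℕ) + 1 = (j : ℕ) ∨ (j : ℕ) + 1 = (i : ℕ) then -1 else 0

/-- `N = Σ_s N^{i^s, j^s}` where `N^{i,j} = (i−j, j; 1, 2, ..., i−1, i, ..., i)`,
with indices `0 ↦ +`, `1 ↦ −`, `a ↦ N_{a-2}` for `a ≥ 2` (and `N_m = min(m+1, i)`). -/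
def Nvec (p k : ℕ) (i : Fin k → ℕ) (j : Fin k → ℤ) : Fin (p + 1) → ℤ := fun a =>
  ∑ s, if (a : ℕ) = 0 then (i s : ℤ) - j s
    else if (a : ℕ) = 1 then j s
    else min ((a : ℤ) - 1) (i s : ℤ)

/-- `N' = (N_0, ..., N_{p-2}, N_+ + N_-)`. -/
def NprimeP (p : ℕ) (N : Fin (p + 1) → ℤ) : Fin p → ℤ := fun a =>
  if h : (a : ℕ) < p - 1 then N ⟨(a : ℕ) + 2, by omega⟩ else N 0 + N 1

/-- `L = N' T_p`; `LvecP p N j` is the (1-based) component `L_{j+1}`. -/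
def LvecP (p : ℕ) (N : Fin (p + 1) → ℤ) : Fin p → ℤ := fun j =>
  ∑ a, NprimeP p N a * Tmat p a j

/-- The product `Π_{s=1}^k (ξ^{-j^s} + ξ^{-j^s+1} + ... + ξ^{-j^s+i^s})` as an element
of the group ring `ℤ[ℤ/p]` (`ξ` being the generator); its coefficient at `r` is
`d_{p,r}[i¹,j¹;...;i^k,j^k]`. -/
def prodElt (p k : ℕ) (i : Fin k → ℕ) (j : Fin k → ℤ) : AddMonoidAlgebra ℤ (ZMod p) :=
  ∏ s, ∑ t ∈ Finset.range (i s + 1), AddMonoidAlgebra.single (((t : ℤ) - j s : ℤ) : ZMod p) 1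

/-- The coefficient of `x^m` (for `m ∈ ℤ`) of an integer polynomial. -/
def coeffZ (P : Polynomial ℤ) (m : ℤ) : ℤ := if 0 ≤ m then P.coeff m.toNat else 0

/-- The generating polynomial `Π_{j=1}^p (1 + x + ... + x^j)^{L_j}`, whose coefficients
are the supernomial coefficients at `q = 1`. -/
def genPoly (p : ℕ) (L : Fin p → ℤ) : Polynomial ℤ :=
  ∏ jj : Fin p, (∑ t ∈ Finset.range ((jj : ℕ) + 2), Polynomial.X ^ t) ^ (L jj).toNat

/-! ### Auxiliary lemmas -/

/-- The sum of all group elements in the group ring. -/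
def uAll (p : ℕ) [NeZero p] : AddMonoidAlgebra ℤ (ZMod p) :=
  ∑ g : ZMod p, AddMonoidAlgebra.single g 1

lemma uAll_apply (p : ℕ) [NeZero p] (g : ZMod p) : (uAll p).coeff g = 1 := by
  classical
  rw [uAll, AddMonoidAlgebra.coeff_sum, Finset.sum_apply']
  simp [Finsupp.single_apply]

/-- The augmentation map of the group ring. -/
def aug (p : ℕ) : AddMonoidAlgebra ℤ (ZMod p) →ₐ[ℤ] ℤ :=
  AddMonoidAlgebra.lift ℤ ℤ (ZMod p) 1

lemma aug_single (p : ℕ) (a : ZMod p) (b : ℤ) :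
    aug p (AddMonoidAlgebra.single a b) = b := by
  simp [aug, AddMonoidAlgebra.lift_single]

lemma uAll_mul_apply (p : ℕ) [NeZero p] (x : AddMonoidAlgebra ℤ (ZMod p)) (r : ZMod p) :
    (uAll p * x).coeff r = aug p x := by
  classical
  induction x using AddMonoidAlgebra.induction with
  | zero => simp
  | single_add a b f ha hb ih =>
      rw [mul_add, map_add, AddMonoidAlgebra.coeff_add, Finsupp.add_apply, ih,
        AddMonoidAlgebra.coeff_mul_single_apply, uAll_apply, one_mul, aug_single]

lemma Tmat_eq (p : ℕ) (a m : Fin p) :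
    Tmat p a m = (if a = m then (if (m : ℕ) = p - 1 then 1 else 2) else 0)
      + (if (a : ℕ) = (m : ℕ) + 1 then -1 else 0)
      + (if (a : ℕ) + 1 = (m : ℕ) then -1 else 0) := by
  simp only [Tmat, Fin.ext_iff]
  split_ifs <;> omega

lemma Nprime_eq (p k : ℕ) (hp : 2 ≤ p) (i : Fin k → ℕ) (hi : ∀ s, i s ≤ p)
    (j : Fin k → ℤ) (a : Fin p) :
    NprimeP p (Nvec p k i j) a = ∑ s, min ((a : ℤ) + 1) ((i s : ℤ)) := by
  unfold NprimeP
  split_ifs with h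
  · unfold Nvec
    refine Finset.sum_congr rfl fun s _ => ?_
    rw [if_neg (by simp), if_neg (by simp)]
    have hv : ((⟨(a : ℕ) + 2, by omega⟩ : Fin (p + 1)) : ℤ) = (a : ℤ) + 2 := by
      simp
    rw [hv]
    congr 1
    ring
  · have ha : (a : ℕ) = p - 1 := by have := a.isLt; omega
    have h1 : ((1 : Fin (p + 1)) : ℕ) = 1 := by
      simp [Fin.val_one']
      omega
    have e0 : Nvec p k i j 0 = ∑ s, ((i s : ℤ) - j s) := by
      unfold Nvec; simp
    have e1 : Nvec p k i j 1 = ∑ s, j s := by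
      unfold Nvec
      refine Finset.sum_congr rfl fun s _ => ?_
      rw [if_neg (by rw [h1]; omega), if_pos h1]
    rw [e0, e1, ← Finset.sum_add_distrib]
    refine Finset.sum_congr rfl fun s _ => ?_
    have := hi s
    omega

lemma tmatInnerSum (p : ℕ) (hp : 2 ≤ p) (I : ℕ) (hI : I ≤ p) (m : Fin p) :
    ∑ a : Fin p, min ((a : ℤ) + 1) (I : ℤ) * Tmat p a m
      = if I = (m : ℕ) + 1 then 1 else 0 := by
  have hm := m.isLt
  simp only [Tmat_eq, mul_add, Finset.sum_add_distrib]
  have hS1 : (∑ a : Fin p, min ((a : ℤ) + 1) (I : ℤ) *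
      (if a = m then (if (m : ℕ) = p - 1 then (1:ℤ) else 2) else 0))
      = min ((m : ℤ) + 1) (I : ℤ) * (if (m : ℕ) = p - 1 then (1:ℤ) else 2) := by
    simp only [mul_ite, mul_zero]
    rw [Finset.sum_ite_eq' Finset.univ m]
    simp
  have hS2 : (∑ a : Fin p, min ((a : ℤ) + 1) (I : ℤ) *
      (if (a : ℕ) = (m : ℕ) + 1 then (-1:ℤ) else 0))
      = if (m : ℕ) + 1 < p then -min ((m : ℤ) + 2) (I : ℤ) else 0 := by
    split_ifs with h
    · rw [Finset.sum_eq_single (⟨(m : ℕ) + 1, h⟩ : Fin p)]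
      · simp only [Fin.val_mk, if_pos rfl]
        push_cast
        ring
      · intro b _ hb
        rw [if_neg (fun hc => hb (Fin.ext hc)), mul_zero]
      · intro hmem; exact absurd (Finset.mem_univ _) hmem
    · apply Finset.sum_eq_zero
      intro a _
      have := a.isLt
      rw [if_neg (by omega), mul_zero]
  have hS3 : (∑ a : Fin p, min ((a : ℤ) + 1) (I : ℤ) *
      (if (a : ℕ) + 1 = (m : ℕ) then (-1:ℤ) else 0))
      = if 0 < (m : ℕ) then -min ((m : ℤ)) (I : ℤ) else 0 := by
    split_ifs with h
    · rw [Finset.sum_eq_single (⟨(m : ℕ) - 1, by omega⟩ : Fin p)]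
      · rw [if_pos (show ((m : ℕ) - 1) + 1 = (m : ℕ) by omega)]
        show min ((((m : ℕ) - 1 : ℕ) : ℤ) + 1) (I : ℤ) * (-1) = _
        have hv : (((m : ℕ) - 1 : ℕ) : ℤ) = (m : ℤ) - 1 := by omega
        rw [hv, mul_neg_one, neg_inj]
        omega
      · intro b _ hb
        rw [if_neg (fun hc => hb (Fin.ext (show (b : ℕ) = (m : ℕ) - 1 by omega))), mul_zero]
      · intro hmem; exact absurd (Finset.mem_univ _) hmem
    · apply Finset.sum_eq_zero
      intro a _
      rw [if_neg (by omega), mul_zero]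
  rw [hS1, hS2, hS3]
  split_ifs <;> omega

lemma Lcount (p k : ℕ) (hp : 2 ≤ p) (i : Fin k → ℕ) (hi : ∀ s, i s ≤ p)
    (j : Fin k → ℤ) (m : Fin p) :
    LvecP p (Nvec p k i j) m = ∑ s : Fin k, if i s = (m : ℕ) + 1 then 1 else 0 := by
  unfold LvecP
  simp only [Nprime_eq p k hp i hi j, Finset.sum_mul]
  rw [Finset.sum_comm]
  exact Finset.sum_congr rfl fun s _ => tmatInnerSum p hp (i s) (hi s) m

/-- if some `i^s = p - 1` (equivalently `L_{p-1} ≥ 1`), then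
`d_{p,r} = 2^{L_1} 3^{L_2} ⋯ (p-1)^{L_{p-2}} p^{L_{p-1}-1} (p+1)^{L_p}` for every `r`.
Here `L m` (0-based) is `L_{m+1}`, so the factor for `m < p-2` has base `m+2`. -/
theorem d_uniform (p k : ℕ) (hp : 2 ≤ p) (i : Fin k → ℕ) (hi : ∀ s, i s ≤ p)
    (j : Fin k → ℤ) (hex : ∃ s, (i s : ℕ) = p - 1) (r : ℕ) (hr : r < p) :
    (prodElt p k i j).coeff ((r : ZMod p)) =
      (∏ m : Fin p, if (m : ℕ) < p - 2 then ((m : ℤ) + 2) ^ (LvecP p (Nvec p k i j) m).toNat else 1) *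
        (p : ℤ) ^ ((LvecP p (Nvec p k i j) ⟨p - 2, by omega⟩).toNat - 1) *
        ((p : ℤ) + 1) ^ (LvecP p (Nvec p k i j) ⟨p - 1, by omega⟩).toNat := by
  classical
  haveI : NeZero p := ⟨by omega⟩
  obtain ⟨s0, hs0⟩ := hex
  set F : Fin k → AddMonoidAlgebra ℤ (ZMod p) :=
    fun s => ∑ t ∈ Finset.range (i s + 1),
      AddMonoidAlgebra.single (((t : ℤ) - j s : ℤ) : ZMod p) 1 with hFdef
  have hip : i s0 + 1 = p := by omega
  -- the special factor equals `uAll p`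
  have hF0 : F s0 = uAll p := by
    rw [hFdef]
    show (∑ t ∈ Finset.range (i s0 + 1),
      AddMonoidAlgebra.single (((t : ℤ) - j s0 : ℤ) : ZMod p) (1:ℤ)) = _
    rw [hip, uAll]
    refine Finset.sum_nbij' (fun t => (((t : ℤ) - j s0 : ℤ) : ZMod p))
      (fun g => (g + ((j s0 : ℤ) : ZMod p)).val) (fun t _ => Finset.mem_univ _)
      (fun g _ => Finset.mem_range.mpr (ZMod.val_lt _)) ?_ ?_ (fun t _ => rfl)
    · intro t ht
      have htp : t < p := Finset.mem_range.mp ht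
      have harg : ((((t : ℤ) - j s0 : ℤ)) : ZMod p) + ((j s0 : ℤ) : ZMod p) = (t : ZMod p) := by
        push_cast
        ring
      show ((((t : ℤ) - j s0 : ℤ) : ZMod p) + ((j s0 : ℤ) : ZMod p)).val = t
      rw [harg]
      exact ZMod.val_cast_of_lt htp
    · intro g _
      have hval : ((((g + ((j s0 : ℤ) : ZMod p)).val : ℕ)) : ZMod p)
          = g + ((j s0 : ℤ) : ZMod p) := by
        rw [ZMod.natCast_val, ZMod.cast_id]
      show (((((g + ((j s0 : ℤ) : ZMod p)).val : ℕ) : ℤ) - j s0 : ℤ) : ZMod p) = g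
      push_cast
      rw [hval]
      ring
  -- coefficient computation
  have hsplit : prodElt p k i j = uAll p * ∏ s ∈ Finset.univ.erase s0, F s := by
    show (∏ s, F s) = _
    rw [← Finset.mul_prod_erase Finset.univ F (Finset.mem_univ s0), hF0]
  have haug : ∀ s, aug p (F s) = (i s : ℤ) + 1 := by
    intro s
    rw [hFdef]
    show aug p (∑ t ∈ Finset.range (i s + 1),
      AddMonoidAlgebra.single (((t : ℤ) - j s : ℤ) : ZMod p) (1:ℤ)) = _
    rw [map_sum]
    simp [aug_single]
  have key : (prodElt p k i j).coeff ((r : ZMod p)) = ∏ s ∈ Finset.univ.erase s0, ((i s : ℤ) + 1) := by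
    rw [hsplit, uAll_mul_apply, map_prod]
    exact Finset.prod_congr rfl fun s _ => haug s
  -- counting
  set cc : ℕ → ℕ := fun v => (Finset.univ.filter fun s => i s = v).card with hccdef
  have hc : ∀ m : Fin p, (LvecP p (Nvec p k i j) m).toNat = cc ((m : ℕ) + 1) := by
    intro m
    rw [Lcount p k hp i hi j m, Finset.sum_boole]
    exact Int.toNat_natCast _
  have hcc1 : 1 ≤ cc (p - 1) := by
    have : s0 ∈ Finset.univ.filter fun s => i s = p - 1 :=
      Finset.mem_filter.mpr ⟨Finset.mem_univ _, hs0⟩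
    exact Finset.card_pos.mpr ⟨s0, this⟩
  -- the full product over all s
  have hprod_all : (∏ s, ((i s : ℤ) + 1)) = ∏ m : Fin p, ((m : ℤ) + 2) ^ cc ((m : ℕ) + 1) := by
    have h1 : (∏ v ∈ Finset.range (p + 1),
        ∏ s ∈ Finset.univ.filter (fun s => i s = v), ((i s : ℤ) + 1)) = ∏ s, ((i s : ℤ) + 1) :=
      Finset.prod_fiberwise_of_maps_to
        (fun s _ => Finset.mem_range.mpr (by have := hi s; omega)) _
    rw [← h1]
    have h2 : ∀ v : ℕ, (∏ s ∈ Finset.univ.filter (fun s => i s = v), ((i s : ℤ) + 1))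
        = ((v : ℤ) + 1) ^ cc v := by
      intro v
      rw [Finset.prod_congr rfl (fun s hs => by rw [(Finset.mem_filter.mp hs).2]),
        Finset.prod_const]
    simp only [h2]
    rw [Finset.prod_range_succ']
    rw [Fin.prod_univ_eq_prod_range (fun v => ((v : ℤ) + 2) ^ cc (v + 1)) p]
    simp only [Nat.cast_zero, zero_add, one_pow, mul_one]
    refine Finset.prod_congr rfl fun v _ => ?_
    push_cast
    ring_nf
  -- split the product over Fin p into the main part and the last two indices
  have split3 : (∏ m : Fin p, ((m : ℤ) + 2) ^ cc ((m : ℕ) + 1))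
      = (∏ m : Fin p, if (m : ℕ) < p - 2 then ((m : ℤ) + 2) ^ cc ((m : ℕ) + 1) else 1)
        * (p : ℤ) ^ cc (p - 1) * ((p : ℤ) + 1) ^ cc p := by
    set c1 : Fin p := ⟨p - 2, by omega⟩ with hc1
    set c2 : Fin p := ⟨p - 1, by omega⟩ with hc2
    set f : Fin p → ℤ := fun m => ((m : ℤ) + 2) ^ cc ((m : ℕ) + 1) with hfdef
    have hstep : ∀ m : Fin p, f m = (if (m : ℕ) < p - 2 then f m else 1) *
        ((if m = c1 then f m else 1) * (if m = c2 then f m else 1)) := by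
      intro m
      have hm := m.isLt
      simp only [Fin.ext_iff, hc1, hc2]
      split_ifs <;> first | ring1 | (exfalso; omega)
    have hfc1 : f c1 = (p : ℤ) ^ cc (p - 1) := by
      have h1 : ((c1 : ℕ) : ℤ) + 2 = (p : ℤ) := by
        show (((p - 2 : ℕ) : ℤ)) + 2 = (p : ℤ); omega
      have h2 : (c1 : ℕ) + 1 = p - 1 := by show p - 2 + 1 = p - 1; omega
      show ((c1 : ℤ) + 2) ^ cc ((c1 : ℕ) + 1) = _
      rw [h1, h2]
    have hfc2 : f c2 = ((p : ℤ) + 1) ^ cc p := by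
      have h1 : ((c2 : ℕ) : ℤ) + 2 = (p : ℤ) + 1 := by
        show (((p - 1 : ℕ) : ℤ)) + 2 = (p : ℤ) + 1; omega
      have h2 : (c2 : ℕ) + 1 = p := by show p - 1 + 1 = p; omega
      show ((c2 : ℤ) + 2) ^ cc ((c2 : ℕ) + 1) = _
      rw [h1, h2]
    calc (∏ m : Fin p, f m)
        = ∏ m : Fin p, ((if (m : ℕ) < p - 2 then f m else 1) *
            ((if m = c1 then f m else 1) * (if m = c2 then f m else 1))) :=
          Finset.prod_congr rfl fun m _ => hstep m
      _ = (∏ m : Fin p, if (m : ℕ) < p - 2 then f m else 1) *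
            ((∏ m : Fin p, if m = c1 then f m else 1) *
             (∏ m : Fin p, if m = c2 then f m else 1)) := by
          rw [Finset.prod_mul_distrib, Finset.prod_mul_distrib]
      _ = (∏ m : Fin p, if (m : ℕ) < p - 2 then f m else 1) * (f c1 * f c2) := by
          rw [Finset.prod_ite_eq' Finset.univ c1 f, Finset.prod_ite_eq' Finset.univ c2 f,
            if_pos (Finset.mem_univ _), if_pos (Finset.mem_univ _)]
      _ = _ := by rw [hfc1, hfc2]; ring
  -- final assembly: multiply both sides by p and compare
  have hpne : (p : ℤ) ≠ 0 := by
    exact_mod_cast (by omega : p ≠ 0)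
  apply mul_left_cancel₀ hpne
  rw [key]
  have hLHS : (p : ℤ) * ∏ s ∈ Finset.univ.erase s0, ((i s : ℤ) + 1) = ∏ s, ((i s : ℤ) + 1) := by
    rw [← Finset.mul_prod_erase Finset.univ _ (Finset.mem_univ s0)]
    congr 1
    have h : ((i s0 : ℤ)) = (p : ℤ) - 1 := by
      have := hs0
      omega
    rw [h]
    ring
  rw [hLHS, hprod_all]
  simp only [hc]
  rw [show ((⟨p - 2, by omega⟩ : Fin p) : ℕ) + 1 = p - 1 from by
      show p - 2 + 1 = p - 1; omega,
    show ((⟨p - 1, by omega⟩ : Fin p) : ℕ) + 1 = p from by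
      show p - 1 + 1 = p; omega]
  rw [split3]
  have hpow : (p : ℤ) ^ cc (p - 1) = (p : ℤ) * (p : ℤ) ^ (cc (p - 1) - 1) := by
    conv_lhs => rw [show cc (p - 1) = (cc (p - 1) - 1) + 1 by omega]
    rw [pow_succ]
    ring
  rw [hpow]
  ring
end
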